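/- Fix n ≥ 1 and a feasible pair (μ, ν) with 0 ≤ μ ≤ 1 and μ² ≤ ν ≤ μ. Consider the supremum U_n(μ,ν) and infimum L_n(μ,ν) of ∫ P_n(q) dπ(q) over all probability measures π on [0,1] with ∫ q dπ = μ and ∫ q² dπ = ν. Then both extrema are attained, and each is attained by a probability measure supported on at most three points of [0,1]. -/

import Mathlib

open MeasureTheory

noncomputable def Pmaj (n : ℕ) (q : ℝ) : ℝ :=
  ∑ ℓ ∈ Finset.Icc (n + 1) (2 * n + 1),
    ((2 * n + 1).choose ℓ : ℝ) * q ^ ℓ * (1 - q) ^ (2 * n + 1 - ℓ)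

def momentClass (μ ν : ℝ) : Set (Measure ℝ) :=
  {π | IsProbabilityMeasure π ∧ π ((Set.Icc (0 : ℝ) 1)ᶜ) = 0 ∧
    (∫ q, q ∂π) = μ ∧ (∫ q, q ^ 2 ∂π) = ν}

def voteVals (n : ℕ) (μ ν : ℝ) : Set ℝ :=
  {x | ∃ π ∈ momentClass μ ν, (∫ q, Pmaj n q ∂π) = x}

namespace ThreeSupportAux

open Set

noncomputable def Fv (n : ℕ) : ℝ → (Fin 3 → ℝ) := fun q => ![q, q ^ 2, Pmaj n q]

lemma continuous_Pmaj (n : ℕ) : Continuous (Pmaj n) := by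
  unfold Pmaj; fun_prop

lemma continuous_Fv (n : ℕ) : Continuous (Fv n) := by
  refine continuous_pi fun i => ?_
  fin_cases i
  · exact continuous_id
  · exact continuous_pow 2
  · exact continuous_Pmaj n

lemma Pmaj_nonneg {n : ℕ} {q : ℝ} (h0 : 0 ≤ q) (h1 : q ≤ 1) : 0 ≤ Pmaj n q := by
  refine Finset.sum_nonneg fun ℓ _ => ?_
  have : (0:ℝ) ≤ 1 - q := by linarith
  positivity

lemma Pmaj_le {n : ℕ} {q : ℝ} (h0 : 0 ≤ q) (h1 : q ≤ 1) : Pmaj n q ≤ 2 ^ (2 * n + 1) := by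
  have h1q : (0:ℝ) ≤ 1 - q := by linarith
  have step1 : Pmaj n q ≤ ∑ ℓ ∈ Finset.Icc (n + 1) (2 * n + 1), ((2 * n + 1).choose ℓ : ℝ) := by
    refine Finset.sum_le_sum fun ℓ _ => ?_
    have hq : q ^ ℓ ≤ 1 := pow_le_one₀ h0 h1
    have hq' : (1 - q) ^ (2 * n + 1 - ℓ) ≤ 1 := pow_le_one₀ h1q (by linarith)
    calc ((2 * n + 1).choose ℓ : ℝ) * q ^ ℓ * (1 - q) ^ (2 * n + 1 - ℓ)
        ≤ ((2 * n + 1).choose ℓ : ℝ) * 1 * 1 := by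
          apply mul_le_mul (mul_le_mul le_rfl hq (by positivity) (by positivity)) hq'
            (by positivity) (by positivity)
      _ = ((2 * n + 1).choose ℓ : ℝ) := by ring
  have step2 : ∑ ℓ ∈ Finset.Icc (n + 1) (2 * n + 1), ((2 * n + 1).choose ℓ : ℝ)
      ≤ ∑ ℓ ∈ Finset.range (2 * n + 1 + 1), ((2 * n + 1).choose ℓ : ℝ) := by
    refine Finset.sum_le_sum_of_subset_of_nonneg ?_ fun _ _ _ => by positivity
    intro ℓ hℓ
    simp only [Finset.mem_Icc] at hℓ
    simp only [Finset.mem_range]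
    omega
  have step3 : ∑ ℓ ∈ Finset.range (2 * n + 1 + 1), ((2 * n + 1).choose ℓ : ℝ)
      = 2 ^ (2 * n + 1) := by
    rw [← Nat.cast_sum, Nat.sum_range_choose]
    push_cast; ring
  linarith

lemma one_le_pow2 (n : ℕ) : (1:ℝ) ≤ 2 ^ (2 * n + 1) := one_le_pow₀ (by norm_num)

lemma Fv_coords (n : ℕ) (q : ℝ) :
    Fv n q 0 = q ∧ Fv n q 1 = q ^ 2 ∧ Fv n q 2 = Pmaj n q := by
  refine ⟨rfl, rfl, rfl⟩

lemma norm_Fv_le (n : ℕ) {q : ℝ} (hq : q ∈ Icc (0:ℝ) 1) : ‖Fv n q‖ ≤ 2 ^ (2 * n + 1) := by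
  obtain ⟨h0, h1⟩ := hq
  have h2 := one_le_pow2 n
  rw [pi_norm_le_iff_of_nonneg (by linarith)]
  intro i
  fin_cases i
  · show ‖q‖ ≤ _
    rw [Real.norm_eq_abs, abs_le]; constructor <;> linarith
  · show ‖q ^ 2‖ ≤ _
    rw [Real.norm_eq_abs, abs_le]; constructor <;> nlinarith
  · show ‖Pmaj n q‖ ≤ _
    rw [Real.norm_eq_abs, abs_le]
    have := Pmaj_nonneg (n := n) h0 h1
    have := Pmaj_le (n := n) h0 h1
    constructor <;> linarith

lemma integrable_of_conc {E : Type*} [NormedAddCommGroup E] {f : ℝ → E} (hf : Continuous f)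
    {C : ℝ} (hC : ∀ q ∈ Icc (0:ℝ) 1, ‖f q‖ ≤ C) {π : Measure ℝ} [IsFiniteMeasure π]
    (hπ : π ((Icc (0:ℝ) 1)ᶜ) = 0) : Integrable f π := by
  refine Integrable.mono' (integrable_const C) hf.aestronglyMeasurable ?_
  rw [ae_iff]
  refine measure_mono_null (fun x hx => ?_) hπ
  simp only [mem_setOf_eq] at hx
  exact fun hI => hx (hC x hI)

lemma integrable_Fv (n : ℕ) {π : Measure ℝ} [IsFiniteMeasure π]
    (hπ : π ((Icc (0:ℝ) 1)ᶜ) = 0) : Integrable (Fv n) π :=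
  integrable_of_conc (continuous_Fv n) (fun q hq => norm_Fv_le n hq) hπ

lemma ae_Icc {π : Measure ℝ} (hπ : π ((Icc (0:ℝ) 1)ᶜ) = 0) :
    ∀ᵐ q ∂π, q ∈ Icc (0:ℝ) 1 := by
  rw [ae_iff]
  exact measure_mono_null (fun x hx => hx) hπ

/-- The vector of the three relevant integrals, as coordinates of a vector integral. -/
lemma integral_Fv_coord (n : ℕ) {π : Measure ℝ} [IsFiniteMeasure π]
    (hπ : π ((Icc (0:ℝ) 1)ᶜ) = 0) (i : Fin 3) :
    (∫ q, Fv n q ∂π) i = ∫ q, Fv n q i ∂π :=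
  ((ContinuousLinearMap.proj (R := ℝ) (φ := fun _ : Fin 3 => ℝ) i).integral_comp_comm
    (integrable_Fv n hπ)).symm

/-- Finite convex combinations of Dirac measures realize prescribed integrals. -/
lemma combo_measure (n : ℕ) {ι : Type*} [Fintype ι] (qs : ι → ℝ) (hqs : ∀ i, qs i ∈ Icc (0:ℝ) 1)
    (w : ι → ℝ) (hw0 : ∀ i, 0 ≤ w i) (hw1 : ∑ i, w i = 1) :
    ∃ π : Measure ℝ, π ∈ momentClass (∑ i, w i * qs i) (∑ i, w i * (qs i) ^ 2) ∧
      (∫ q, Pmaj n q ∂π) = ∑ i, w i * Pmaj n (qs i) ∧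
      ∃ s : Finset ℝ, s.card ≤ Fintype.card ι ∧ π ((↑s : Set ℝ)ᶜ) = 0 := by
  classical
  set π : Measure ℝ :=
    ∑ i ∈ Finset.univ, (ENNReal.ofReal (w i)) • Measure.dirac (qs i) with hπdef
  have happly : ∀ (t : Set ℝ), π t = ∑ i, (ENNReal.ofReal (w i)) * Measure.dirac (qs i) t := by
    intro t
    rw [hπdef]
    rw [Measure.coe_finset_sum]
    simp [Measure.smul_apply, smul_eq_mul]
  have hint : ∀ f : ℝ → ℝ, Measurable f → (∫ q, f q ∂π) = ∑ i, w i * f (qs i) := by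
    intro f hf
    have hfi : ∀ i ∈ Finset.univ, Integrable f ((ENNReal.ofReal (w i)) • Measure.dirac (qs i)) := by
      intro i _
      refine Integrable.smul_measure ?_ ENNReal.ofReal_ne_top
      exact (integrable_const (f (qs i))).congr (ae_eq_dirac f).symm
    rw [hπdef, integral_finset_sum_measure hfi]
    refine Finset.sum_congr rfl fun i _ => ?_
    rw [integral_smul_measure, integral_dirac, ENNReal.toReal_ofReal (hw0 i), smul_eq_mul]
  have hprob : IsProbabilityMeasure π := by
    constructor
    rw [happly]
    simp only [measure_univ, mul_one]
    rw [← ENNReal.ofReal_sum_of_nonneg (fun i _ => hw0 i), hw1, ENNReal.ofReal_one]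
  have hconc : π ((Icc (0:ℝ) 1)ᶜ) = 0 := by
    rw [happly]
    refine Finset.sum_eq_zero fun i _ => ?_
    rw [Measure.dirac_apply' _ (measurableSet_Icc.compl)]
    rw [Set.indicator_of_notMem (by simpa using hqs i)]
    simp
  refine ⟨π, ⟨hprob, hconc, ?_, ?_⟩, ?_, ?_⟩
  · exact hint (fun q => q) measurable_id
  · exact hint (fun q => q ^ 2) (measurable_id.pow_const 2)
  · exact hint (Pmaj n) (continuous_Pmaj n).measurable
  · refine ⟨Finset.image qs Finset.univ, ?_, ?_⟩
    · exact (Finset.card_image_le).trans (by simp)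
    · rw [happly]
      refine Finset.sum_eq_zero fun i _ => ?_
      have hmem : qs i ∈ (↑(Finset.image qs Finset.univ) : Set ℝ) := by
        simp
      rw [Measure.dirac_apply' _ ((Finset.image qs Finset.univ).finite_toSet.measurableSet.compl)]
      rw [Set.indicator_of_notMem (by simpa using hmem)]
      simp

noncomputable def curve (n : ℕ) : Set (Fin 3 → ℝ) := Fv n '' Icc 0 1

noncomputable def Kset (n : ℕ) : Set (Fin 3 → ℝ) := convexHull ℝ (curve n)

lemma isCompact_curve (n : ℕ) : IsCompact (curve n) :=
  isCompact_Icc.image (continuous_Fv n)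

noncomputable def gmap : (Fin 4 → ℝ) × (Fin 4 → (Fin 3 → ℝ)) → (Fin 3 → ℝ) :=
  fun p => ∑ i, p.1 i • p.2 i

noncomputable def Dset (n : ℕ) : Set ((Fin 4 → ℝ) × (Fin 4 → (Fin 3 → ℝ))) :=
  (stdSimplex ℝ (Fin 4)) ×ˢ (Set.univ.pi fun _ => curve n)

lemma continuous_gmap : Continuous gmap := by
  unfold gmap
  exact continuous_finset_sum _ fun i _ =>
    ((continuous_apply i).comp continuous_fst).smul ((continuous_apply i).comp continuous_snd)

lemma card_le_four {ι : Type*} [Fintype ι] {z : ι → (Fin 3 → ℝ)}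
    (hz : AffineIndependent ℝ z) : Fintype.card ι ≤ 4 := by
  have h1 := hz.card_le_finrank_succ
  have h2 : Module.finrank ℝ (vectorSpan ℝ (Set.range z)) ≤ Module.finrank ℝ (Fin 3 → ℝ) :=
    Submodule.finrank_le _
  rw [Module.finrank_fin_fun] at h2
  omega

lemma hull_subset_image (n : ℕ) : Kset n ⊆ gmap '' Dset n := by
  classical
  intro x hx
  obtain ⟨ι, hι, z, w, hzC, hAI, hw0, hw1, hzw⟩ := eq_pos_convex_span_of_mem_convexHull hx
  have hcard : Fintype.card ι ≤ 4 := card_le_four hAI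
  obtain ⟨f⟩ : Nonempty (ι ↪ Fin 4) :=
    Function.Embedding.nonempty_of_card_le (by simpa using hcard)
  -- a base point of the curve
  have hc0 : Fv n 0 ∈ curve n := ⟨0, by constructor <;> norm_num, rfl⟩
  set W : Fin 4 → ℝ := Function.extend f w 0 with hW
  set Z : Fin 4 → (Fin 3 → ℝ) := Function.extend f z (fun _ => Fv n 0) with hZ
  have hWf : ∀ i : ι, W (f i) = w i := fun i => f.injective.extend_apply w 0 i
  have hZf : ∀ i : ι, Z (f i) = z i := fun i => f.injective.extend_apply z _ i
  have hWout : ∀ j, j ∉ Finset.image f Finset.univ → W j = 0 := by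
    intro j hj
    rw [hW, Function.extend_apply' _ _ _ (by simpa using hj)]
    rfl
  have hsum : ∀ (g : ℝ → (Fin 3 → ℝ) → (Fin 3 → ℝ)), (∀ x, g 0 x = 0) →
      ∑ j, g (W j) (Z j) = ∑ i, g (w i) (z i) := by
    intro g hg
    rw [← Finset.sum_subset (Finset.subset_univ (Finset.image f Finset.univ))
      (fun j _ hj => by rw [hWout j hj, hg]),
      Finset.sum_image (fun a _ b _ h => f.injective h)]
    exact Finset.sum_congr rfl fun i _ => by rw [hWf, hZf]
  have hsum' : ∑ j, W j = ∑ i, w i := by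
    rw [← Finset.sum_subset (Finset.subset_univ (Finset.image f Finset.univ))
      (fun j _ hj => hWout j hj),
      Finset.sum_image (fun a _ b _ h => f.injective h)]
    exact Finset.sum_congr rfl fun i _ => hWf i
  refine ⟨⟨W, Z⟩, ⟨⟨?_, ?_⟩, ?_⟩, ?_⟩
  · intro j
    show 0 ≤ W j
    rcases em (∃ i, f i = j) with ⟨i, rfl⟩ | h
    · rw [hWf]; exact (hw0 i).le
    · rw [hWout j (by simpa using h)]
  · rw [hsum', hw1]
  · intro j _
    show Z j ∈ curve n
    rcases em (∃ i, f i = j) with ⟨i, rfl⟩ | h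
    · rw [hZf]; exact hzC ⟨i, rfl⟩
    · rw [hZ, Function.extend_apply' _ _ _ h]; exact hc0
  · show ∑ j, W j • Z j = x
    rw [hsum (fun a v => a • v) (fun v => zero_smul ℝ v), hzw]

lemma image_subset_hull (n : ℕ) : gmap '' Dset n ⊆ Kset n := by
  rintro x ⟨⟨W, Z⟩, ⟨⟨hW0, hW1⟩, hZ⟩, rfl⟩
  show ∑ j, W j • Z j ∈ convexHull ℝ (curve n)
  rw [← Finset.centerMass_eq_of_sum_1 _ _ hW1]
  exact Finset.centerMass_mem_convexHull _ (fun i _ => hW0 i) (by rw [hW1]; norm_num)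
    (fun i _ => hZ i (Set.mem_univ i))

lemma isCompact_K (n : ℕ) : IsCompact (Kset n) := by
  have : Kset n = gmap '' Dset n :=
    le_antisymm (hull_subset_image n) (image_subset_hull n)
  rw [this]
  exact (((isCompact_stdSimplex ℝ _).prod
    (isCompact_univ_pi fun _ => isCompact_curve n)).image continuous_gmap)

/-- The integral vector of any measure in the moment class lies in `Kset` with the
prescribed first two coordinates. -/
lemma vec_mem (n : ℕ) {μ ν : ℝ} {π : Measure ℝ} (hπ : π ∈ momentClass μ ν) :
    (∫ q, Fv n q ∂π) ∈ Kset n ∧ (∫ q, Fv n q ∂π) 0 = μ ∧ (∫ q, Fv n q ∂π) 1 = ν ∧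
      (∫ q, Fv n q ∂π) 2 = ∫ q, Pmaj n q ∂π := by
  obtain ⟨hprob, hconc, hm1, hm2⟩ := hπ
  haveI := hprob
  refine ⟨?_, ?_, ?_, ?_⟩
  · refine Convex.integral_mem (convex_convexHull ℝ _) (isCompact_K n).isClosed ?_
      (integrable_Fv n hconc)
    filter_upwards [ae_Icc hconc] with q hq
    exact subset_convexHull ℝ _ ⟨q, hq, rfl⟩
  · rw [integral_Fv_coord n hconc 0]; exact hm1
  · rw [integral_Fv_coord n hconc 1]; exact hm2
  · rw [integral_Fv_coord n hconc 2]
    exact integral_congr_ae (Filter.Eventually.of_forall fun q => rfl)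

noncomputable def e2 : Fin 3 → ℝ := Pi.single 2 1

lemma e2_coords : e2 0 = 0 ∧ e2 1 = 0 ∧ e2 2 = 1 := by
  refine ⟨?_, ?_, ?_⟩ <;> simp [e2, Pi.single_apply]

lemma norm_e2_le : ‖e2‖ ≤ 1 := by
  rw [pi_norm_le_iff_of_nonneg zero_le_one]
  intro i
  fin_cases i <;> simp [e2, Pi.single_apply]

/-- Key dichotomy: any point of `Kset` either comes from a measure supported on at most three
points with matching moments, or can be perturbed vertically in both directions within `Kset`. -/
lemma decompose (n : ℕ) (p : Fin 3 → ℝ) (hp : p ∈ Kset n) :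
    (∃ π ∈ momentClass (p 0) (p 1), (∃ s : Finset ℝ, s.card ≤ 3 ∧ π ((↑s : Set ℝ)ᶜ) = 0) ∧
        (∫ q, Pmaj n q ∂π) = p 2) ∨
    (∃ δ : ℝ, 0 < δ ∧ p + δ • e2 ∈ Kset n ∧ p - δ • e2 ∈ Kset n) := by
  classical
  obtain ⟨ι, hι, z, w, hzC, hAI, hw0, hw1, hzw⟩ := eq_pos_convex_span_of_mem_convexHull hp
  by_cases hcard : Fintype.card ι ≤ 3
  · -- at most three points: build the measure
    left
    choose qs hqsI hqsF using fun i : ι => hzC (Set.mem_range_self (f := z) i)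
    obtain ⟨π, hπmem, hπint, s, hs, hsupp⟩ :=
      combo_measure n qs hqsI w (fun i => (hw0 i).le) hw1
    have hcoord : ∀ j : Fin 3, ∑ i, w i * z i j = p j := by
      intro j
      rw [← hzw]
      rw [Finset.sum_apply]
      exact Finset.sum_congr rfl fun i _ => rfl
    have h0 : ∑ i, w i * qs i = p 0 := by
      rw [← hcoord 0]
      exact Finset.sum_congr rfl fun i _ => by rw [← hqsF i]; rfl
    have h1 : ∑ i, w i * (qs i) ^ 2 = p 1 := by
      rw [← hcoord 1]
      exact Finset.sum_congr rfl fun i _ => by rw [← hqsF i]; rfl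
    have h2 : ∑ i, w i * Pmaj n (qs i) = p 2 := by
      rw [← hcoord 2]
      exact Finset.sum_congr rfl fun i _ => by rw [← hqsF i]; rfl
    rw [h0, h1] at hπmem
    exact ⟨π, hπmem, ⟨s, hs.trans hcard, hsupp⟩, by rw [hπint, h2]⟩
  · -- four points: interior argument
    right
    have hcard4 : Fintype.card ι = 4 := le_antisymm (card_le_four hAI) (by omega)
    have htop : affineSpan ℝ (Set.range z) = ⊤ := by
      rw [hAI.affineSpan_eq_top_iff_card_eq_finrank_add_one, Module.finrank_fin_fun, hcard4]
    set b : AffineBasis ι ℝ (Fin 3 → ℝ) := ⟨z, hAI, htop⟩ with hb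
    have hbz : ⇑b = z := rfl
    have hpcomb : p = (Finset.univ.affineCombination ℝ z) w := by
      rw [Finset.affineCombination_eq_linear_combination _ _ _ hw1, ← hzw]
    have hpint : p ∈ interior (Kset n) := by
      have h1 : p ∈ interior (convexHull ℝ (Set.range ⇑b)) := by
        rw [AffineBasis.interior_convexHull]
        intro i
        have h2 : (b.coord i) ((Finset.univ.affineCombination ℝ z) w) = w i :=
          b.coord_apply_combination_of_mem (Finset.mem_univ i) hw1
        rw [hpcomb, h2]
        exact hw0 i
      refine interior_mono (convexHull_mono ?_) h1
      rw [hbz]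
      exact hzC
    obtain ⟨ε, hε, hball⟩ := Metric.mem_nhds_iff.mp (mem_interior_iff_mem_nhds.mp hpint)
    refine ⟨ε / 2, by linarith, ?_, ?_⟩ <;>
    · refine hball ?_
      rw [Metric.mem_ball, dist_eq_norm]
      have : ‖(ε / 2) • e2‖ ≤ ε / 2 := by
        rw [norm_smul, Real.norm_eq_abs, abs_of_pos (by linarith)]
        nlinarith [norm_e2_le, norm_nonneg e2]
      first
        | (rw [add_sub_cancel_left]; linarith)
        | (rw [sub_sub_cancel_left, norm_neg]; linarith)

/-- Existence of some measure in a feasible moment class. -/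
lemma momentClass_nonempty (n : ℕ) {μ ν : ℝ} (hμ0 : 0 ≤ μ) (hμ1 : μ ≤ 1)
    (hν1 : μ ^ 2 ≤ ν) (hν2 : ν ≤ μ) : ∃ π₀, π₀ ∈ momentClass μ ν := by
  by_cases hμ : μ = 0
  · have hν0 : ν = 0 := le_antisymm (hμ ▸ hν2) (le_trans (by positivity) hν1)
    obtain ⟨π, hπ, -, -⟩ := combo_measure n (ι := Fin 1) (fun _ => 0)
      (fun _ => ⟨le_rfl, zero_le_one⟩) (fun _ => 1) (fun _ => zero_le_one) (by simp)
    have e1 : (∑ _i : Fin 1, (1:ℝ) * (0:ℝ)) = μ := by simp [hμ]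
    have e2 : (∑ _i : Fin 1, (1:ℝ) * (0:ℝ) ^ 2) = ν := by simp [hν0]
    rw [e1, e2] at hπ
    exact ⟨π, hπ⟩
  · have hμpos : 0 < μ := lt_of_le_of_ne hμ0 (Ne.symm hμ)
    have hνpos : 0 < ν := lt_of_lt_of_le (by positivity) hν1
    set t : ℝ := μ ^ 2 / ν with ht
    set c : ℝ := ν / μ with hc
    have htmem : 0 ≤ t ∧ t ≤ 1 := ⟨by positivity, by rw [ht, div_le_one hνpos]; exact hν1⟩
    have hcmem : c ∈ Icc (0:ℝ) 1 := ⟨by positivity, by rw [hc, div_le_one hμpos]; exact hν2⟩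
    obtain ⟨π, hπ, -, -⟩ := combo_measure n (ι := Fin 2) ![0, c]
      (fun i => by fin_cases i <;> first | exact ⟨le_rfl, zero_le_one⟩ | exact hcmem)
      ![1 - t, t] (fun i => by
        fin_cases i
        · show (0:ℝ) ≤ 1 - t; linarith [htmem.2]
        · show (0:ℝ) ≤ t; exact htmem.1)
      (by rw [Fin.sum_univ_two]; show (1 - t) + t = 1; ring)
    have e1 : (∑ i : Fin 2, ![1 - t, t] i * ![0, c] i) = μ := by
      rw [Fin.sum_univ_two]
      show (1 - t) * 0 + t * c = μ
      rw [ht, hc]; field_simp; ring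
    have e2 : (∑ i : Fin 2, ![1 - t, t] i * (![0, c] i) ^ 2) = ν := by
      rw [Fin.sum_univ_two]
      show (1 - t) * 0 ^ 2 + t * c ^ 2 = ν
      rw [ht, hc]; field_simp; ring
    rw [e1, e2] at hπ
    exact ⟨π, hπ⟩

end ThreeSupportAux

open ThreeSupportAux in
theorem three_support_reduction (n : ℕ) (hn : 1 ≤ n) (μ ν : ℝ)
    (hμ0 : 0 ≤ μ) (hμ1 : μ ≤ 1) (hν1 : μ ^ 2 ≤ ν) (hν2 : ν ≤ μ) :
    (∃ π ∈ momentClass μ ν, (∃ s : Finset ℝ, s.card ≤ 3 ∧ π ((↑s : Set ℝ)ᶜ) = 0) ∧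
        (∫ q, Pmaj n q ∂π) = sSup (voteVals n μ ν)) ∧
    (∃ π ∈ momentClass μ ν, (∃ s : Finset ℝ, s.card ≤ 3 ∧ π ((↑s : Set ℝ)ᶜ) = 0) ∧
        (∫ q, Pmaj n q ∂π) = sInf (voteVals n μ ν)) := by
  classical
  obtain ⟨π₀, hπ₀⟩ := momentClass_nonempty n hμ0 hμ1 hν1 hν2
  set T : Set (Fin 3 → ℝ) := Kset n ∩ {v | v 0 = μ ∧ v 1 = ν} with hT
  have hTclosed : IsClosed {v : Fin 3 → ℝ | v 0 = μ ∧ v 1 = ν} :=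
    (isClosed_eq (continuous_apply 0) continuous_const).inter
      (isClosed_eq (continuous_apply 1) continuous_const)
  have hTcomp : IsCompact T := (isCompact_K n).inter_right hTclosed
  have hv₀ := vec_mem n hπ₀
  have hTne : T.Nonempty := ⟨_, hv₀.1, hv₀.2.1, hv₀.2.2.1⟩
  have hperturb : ∀ δ : ℝ, ∀ p ∈ T, p + δ • e2 ∈ Kset n → p + δ • e2 ∈ T := by
    intro δ p hpT hmem
    refine ⟨hmem, ?_, ?_⟩ <;>
      simp only [Pi.add_apply, Pi.smul_apply, e2_coords.1, e2_coords.2.1, smul_eq_mul,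
        mul_zero, add_zero]
    · exact hpT.2.1
    · exact hpT.2.2
  constructor
  · -- supremum
    obtain ⟨p, hpT, hpmax⟩ := hTcomp.exists_isMaxOn hTne (continuous_apply 2).continuousOn
    have hub : ∀ x ∈ voteVals n μ ν, x ≤ p 2 := by
      rintro x ⟨π, hπ, rfl⟩
      have h := vec_mem n hπ
      have hmemT : (∫ q, Fv n q ∂π) ∈ T := ⟨h.1, h.2.1, h.2.2.1⟩
      have := isMaxOn_iff.mp hpmax _ hmemT
      rw [← h.2.2.2]; exact this
    rcases decompose n p hpT.1 with ⟨π, hπ, hsupp, hint⟩ | ⟨δ, hδ, hm, -⟩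
    · rw [hpT.2.1, hpT.2.2] at hπ
      have hmem : p 2 ∈ voteVals n μ ν := ⟨π, hπ, hint⟩
      have hsup : sSup (voteVals n μ ν) = p 2 :=
        le_antisymm (csSup_le ⟨p 2, hmem⟩ hub) (le_csSup ⟨p 2, hub⟩ hmem)
      exact ⟨π, hπ, hsupp, by rw [hint, hsup]⟩
    · exfalso
      have := isMaxOn_iff.mp hpmax _ (hperturb δ p hpT hm)
      simp only [Pi.add_apply, Pi.smul_apply, e2_coords.2.2, smul_eq_mul, mul_one] at this
      linarith
  · -- infimum
    obtain ⟨p, hpT, hpmin⟩ := hTcomp.exists_isMinOn hTne (continuous_apply 2).continuousOn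
    have hlb : ∀ x ∈ voteVals n μ ν, p 2 ≤ x := by
      rintro x ⟨π, hπ, rfl⟩
      have h := vec_mem n hπ
      have hmemT : (∫ q, Fv n q ∂π) ∈ T := ⟨h.1, h.2.1, h.2.2.1⟩
      have := isMinOn_iff.mp hpmin _ hmemT
      rw [← h.2.2.2]; exact this
    rcases decompose n p hpT.1 with ⟨π, hπ, hsupp, hint⟩ | ⟨δ, hδ, -, hm⟩
    · rw [hpT.2.1, hpT.2.2] at hπ
      have hmem : p 2 ∈ voteVals n μ ν := ⟨π, hπ, hint⟩
      have hinf : sInf (voteVals n μ ν) = p 2 :=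
        le_antisymm (csInf_le ⟨p 2, hlb⟩ hmem) (le_csInf ⟨p 2, hmem⟩ hlb)
      exact ⟨π, hπ, hsupp, by rw [hint, hinf]⟩
    · exfalso
      have hmemT : p - δ • e2 ∈ T := by
        have := hperturb (-δ) p hpT ?_
        · rw [neg_smul, ← sub_eq_add_neg] at this; exact this
        · rw [neg_smul, ← sub_eq_add_neg]; exact hm
      have := isMinOn_iff.mp hpmin _ hmemT
      simp only [Pi.sub_apply, Pi.smul_apply, e2_coords.2.2, smul_eq_mul, mul_one] at this
      linarith
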